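/- arXiv:1702.00269 — 2 statements merged into one kernel-verified Lean document; each statement's English description precedes it below -/
import Mathlib

section
/- Suppose the refinable function φ is continuous on ℝ^s. If J ⊆ ℝ^s is an invariant subspace of M (i.e. MJ ⊆ J), then the subspace L = span{v(y) − v(x) : x, y ∈ G, y − x ∈ J} of ℝ^N is invariant under every transition matrix T_d, d ∈ D(M). -/
open Filter MeasureTheory Matrix Set
open scoped NNReal ENNReal

noncomputable section

/-- Cast of an integer vector to a real vector. -/
def icast {s : ℕ} (k : Fin s → ℤ) : Fin s → ℝ := fun j => (k j : ℝ)

/-- The Euclidean norm on `ι → ℝ`. -/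
def eNorm {ι : Type*} [Fintype ι] (u : ι → ℝ) : ℝ := Real.sqrt (∑ k, (u k) ^ 2)

/-- The set of products of length `k` of elements of the family `𝓑`. -/
def prodOfLen {A : Type*} [NormedRing A] (𝓑 : Set A) (k : ℕ) : Set A :=
  {P | ∃ f : Fin k → A, (∀ i, f i ∈ 𝓑) ∧ P = (List.ofFn f).prod}

/-- The joint spectral radius of a family `𝓑`:
`ρ(𝓑) = lim_{k→∞} max_{B₁,…,B_k ∈ 𝓑} ‖B₁⋯B_k‖^{1/k}` (the limit exists, hence
equals the `limsup`). -/
def jsr {A : Type*} [NormedRing A] (𝓑 : Set A) : ℝ :=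
  Filter.limsup
    (fun k : ℕ => sSup ((fun P : A => ‖P‖ ^ ((1 : ℝ) / (k : ℝ))) '' prodOfLen 𝓑 k))
    Filter.atTop

/-- The `p`-radius of a finite family `B : ι → A`:
`ρ_p = lim_{k→∞} (m^{-k} ∑ ‖B_{d₁}⋯B_{d_k}‖^p)^{1/(pk)}` (the limit exists, hence
equals the `limsup`). -/
def pRadius {A : Type*} [NormedRing A] {ι : Type*} [Fintype ι] (p : ℝ) (B : ι → A) : ℝ :=
  Filter.limsup
    (fun k : ℕ =>
      ((∑ f : Fin k → ι, ‖(List.ofFn fun i => B (f i)).prod‖ ^ p) / (Fintype.card ι : ℝ) ^ k)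
        ^ ((1 : ℝ) / (p * (k : ℝ))))
    Filter.atTop

/-- The resonance degree of a family `𝓑`: the least `ν` such that all products of
length `k` are bounded by `C ρ(𝓑)^k k^ν`. -/
def resDeg {A : Type*} [NormedRing A] (𝓑 : Set A) : ℕ :=
  sInf {ν : ℕ | ∃ C > 0, ∀ k : ℕ, 1 ≤ k → ∀ P ∈ prodOfLen 𝓑 k,
    ‖P‖ ≤ C * (jsr 𝓑) ^ k * (k : ℝ) ^ (ν : ℕ)}

/-- The attractor `G = {∑_{i≥1} M^{-i} d_i : d_i ∈ D}` of the dilation matrix `M`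
and the digit set `D`. -/
def Gset (s : ℕ) (M : Matrix (Fin s) (Fin s) ℤ) (D : Finset (Fin s → ℤ)) :
    Set (Fin s → ℝ) :=
  {x | ∃ f : ℕ → (Fin s → ℤ), (∀ i, f i ∈ D) ∧
    x = ∑' i : ℕ, (((M.map (Int.cast : ℤ → ℝ))⁻¹) ^ (i + 1)).mulVec (icast (f i))}

/-- `K = {∑_{j≥1} M^{-j} γ_j : γ_j ∈ supp c}`, carrying the support of the refinable
function. -/
def Kset (s : ℕ) (M : Matrix (Fin s) (Fin s) ℤ) (c : (Fin s → ℤ) → ℝ) :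
    Set (Fin s → ℝ) :=
  {x | ∃ γ : ℕ → (Fin s → ℤ), (∀ j, γ j ∈ Function.support c) ∧
    x = ∑' j : ℕ, (((M.map (Int.cast : ℤ → ℝ))⁻¹) ^ (j + 1)).mulVec (icast (γ j))}

/-- The transition matrix `T_d`, `(T_d)_{a,b} = c_{Ma - b + d}`, `a, b ∈ Ω`. -/
def Tmat (s : ℕ) (M : Matrix (Fin s) (Fin s) ℤ) (c : (Fin s → ℤ) → ℝ)
    (Ω : Finset (Fin s → ℤ)) (d : Fin s → ℤ) :
    Matrix {k // k ∈ Ω} {k // k ∈ Ω} ℝ :=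
  fun a b => c (M.mulVec a.1 - b.1 + d)

/-- The vector-valued function `v(x) = (φ(x+k))_{k ∈ Ω}`. -/
def vvec (s : ℕ) (Ω : Finset (Fin s → ℤ)) (φ : (Fin s → ℝ) → ℝ) (x : Fin s → ℝ) :
    {k // k ∈ Ω} → ℝ :=
  fun k => φ (x + icast k.1)

/-- The subspace `span{v(y) - v(x) : x, y ∈ G, y - x ∈ J}` of `ℝ^N`. -/
def Udiff (s : ℕ) (M : Matrix (Fin s) (Fin s) ℤ) (D : Finset (Fin s → ℤ))
    (Ω : Finset (Fin s → ℤ)) (φ : (Fin s → ℝ) → ℝ) (J : Submodule ℝ (Fin s → ℝ)) :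
    Submodule ℝ ({k // k ∈ Ω} → ℝ) :=
  Submodule.span ℝ {u | ∃ x ∈ Gset s M D, ∃ y ∈ Gset s M D, y - x ∈ J ∧
    u = vvec s Ω φ y - vvec s Ω φ x}

/-- The family of restrictions of the operators in `Ts` to a common invariant subspace
`U`, realized as continuous linear operators of `U`, characterized through their action. -/
def restrOps {ι : Type*} [Fintype ι] (Ts : Set ((ι → ℝ) →ₗ[ℝ] (ι → ℝ)))
    (U : Submodule ℝ (ι → ℝ)) : Set (↥U →L[ℝ] ↥U) :=
  {A | ∃ T ∈ Ts, ∀ u : U, (A u : ι → ℝ) = T u}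

/-- The Hölder exponent of `φ` (with the Euclidean norm). -/
def holderExp {s : ℕ} (φ : (Fin s → ℝ) → ℝ) : ℝ :=
  sSup {α : ℝ | 0 ≤ α ∧ ∃ C > 0, ∀ h x : Fin s → ℝ, |φ (x + h) - φ x| ≤ C * eNorm h ^ α}

/-- The Hölder exponent of `φ` along a linear subspace `J ⊆ ℝ^s`. -/
def holderExpAlong {s : ℕ} (J : Submodule ℝ (Fin s → ℝ)) (φ : (Fin s → ℝ) → ℝ) : ℝ :=
  sSup {α : ℝ | 0 ≤ α ∧ ∃ C > 0, ∀ h ∈ J, ∀ x : Fin s → ℝ,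
    |φ (x + h) - φ x| ≤ C * eNorm h ^ α}

/-- The local Hölder exponent of a vector-valued function `f` at the point `x₀` along a
subspace `J ⊆ ℝ^s`. -/
def locHolderAlong {s : ℕ} {ι : Type*} [Fintype ι] (f : (Fin s → ℝ) → (ι → ℝ))
    (x₀ : Fin s → ℝ) (J : Submodule ℝ (Fin s → ℝ)) : ℝ :=
  sSup {α : ℝ | 0 ≤ α ∧ ∃ C > 0, ∀ h ∈ J, eNorm (f (x₀ + h) - f x₀) ≤ C * eNorm h ^ α}

/-- The `L_p` Hölder exponent of `φ`. -/
def holderExpLp {s : ℕ} (p : ℝ) (φ : (Fin s → ℝ) → ℝ) : ℝ :=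
  sSup {α : ℝ | 0 ≤ α ∧ ∃ C > 0, ∀ h : Fin s → ℝ,
    eLpNorm (fun x => φ (x + h) - φ x) (ENNReal.ofReal p) volume ≤
      ENNReal.ofReal (C * eNorm h ^ α)}

/-- The `L_p` Hölder exponent of `φ` along a linear subspace `J ⊆ ℝ^s`. -/
def holderExpAlongLp {s : ℕ} (p : ℝ) (J : Submodule ℝ (Fin s → ℝ))
    (φ : (Fin s → ℝ) → ℝ) : ℝ :=
  sSup {α : ℝ | 0 ≤ α ∧ ∃ C > 0, ∀ h ∈ J,
    eLpNorm (fun x => φ (x + h) - φ x) (ENNReal.ofReal p) volume ≤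
      ENNReal.ofReal (C * eNorm h ^ α)}

/-- The affine map `M_d^{-1} x = M^{-1}(x + d)`. -/
def invStep (s : ℕ) (Minv : Matrix (Fin s) (Fin s) ℝ) (d : Fin s → ℤ)
    (x : Fin s → ℝ) : Fin s → ℝ :=
  Minv.mulVec (x + icast d)

/-- The composition `M_{dig a}^{-1} ∘ M_{dig (a+1)}^{-1} ∘ ⋯ ∘ M_{dig (a+n-1)}^{-1}`. -/
def compRange (s : ℕ) (Minv : Matrix (Fin s) (Fin s) ℝ) (dig : ℕ → (Fin s → ℤ)) :
    ℕ → ℕ → (Fin s → ℝ) → (Fin s → ℝ)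
  | _, 0 => id
  | a, n + 1 => invStep s Minv (dig a) ∘ compRange s Minv dig (a + 1) n

/-- The subdivision operator `(Sa)_i = ∑_j c_{i - Mj} a_j`. -/
def subdivOp (s : ℕ) (c : (Fin s → ℤ) → ℝ) (M : Matrix (Fin s) (Fin s) ℤ)
    (a : (Fin s → ℤ) → ℝ) : (Fin s → ℤ) → ℝ :=
  fun i => ∑ᶠ j : Fin s → ℤ, c (i - M.mulVec j) * a j

/-- The linear functional `w ↦ ∑ k, w k`. -/
def sumFunctional (ι : Type*) [Fintype ι] : (ι → ℝ) →ₗ[ℝ] ℝ where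
  toFun w := ∑ k, w k
  map_add' := by intros; simp [Finset.sum_add_distrib]
  map_smul' := by intros; simp [Finset.mul_sum]

/-- The family `𝒯 = {T_d : d ∈ D}` of transition operators. -/
def Tfam (s : ℕ) (M : Matrix (Fin s) (Fin s) ℤ) (c : (Fin s → ℤ) → ℝ)
    (Ω D : Finset (Fin s → ℤ)) :
    Set (({k // k ∈ Ω} → ℝ) →ₗ[ℝ] ({k // k ∈ Ω} → ℝ)) :=
  {T | ∃ d ∈ D, T = (Tmat s M c Ω d).mulVecLin}

/-- The minimal common invariant subspace of the transition operators containing the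
vectors `T_d w - w`, `d ∈ D`. -/
def minInvSub (s : ℕ) (M : Matrix (Fin s) (Fin s) ℤ) (c : (Fin s → ℤ) → ℝ)
    (Ω D : Finset (Fin s → ℤ)) (w : {k // k ∈ Ω} → ℝ) :
    Submodule ℝ ({k // k ∈ Ω} → ℝ) :=
  sInf {U' | (∀ d ∈ D, ∀ u ∈ U', (Tmat s M c Ω d).mulVecLin u ∈ U') ∧
    (∀ d ∈ D, (Tmat s M c Ω d).mulVecLin w - w ∈ U')}

/-- The complexification of a real subspace of `ℝ^s` inside `ℂ^s`. -/
def csub {s : ℕ} (J : Submodule ℝ (Fin s → ℝ)) : Submodule ℂ (Fin s → ℂ) :=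
  Submodule.span ℂ ((fun x (j : Fin s) => ((x j : ℝ) : ℂ)) '' (J : Set (Fin s → ℝ)))

namespace Aux

attribute [local instance] Matrix.linftyOpNormedRing Matrix.linftyOpNormedAlgebra
  Matrix.linftyOpSeminormedAddCommGroup

variable {s : ℕ}

/-- real version of M -/
abbrev rmat (M : Matrix (Fin s) (Fin s) ℤ) : Matrix (Fin s) (Fin s) ℝ :=
  M.map (Int.cast : ℤ → ℝ)

/-- complex version of M -/
abbrev cmat (M : Matrix (Fin s) (Fin s) ℤ) : Matrix (Fin s) (Fin s) ℂ :=
  M.map (Int.cast : ℤ → ℂ)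

lemma cmat_eq (M : Matrix (Fin s) (Fin s) ℤ) :
    cmat M = (rmat M).map (algebraMap ℝ ℂ) := by
  ext i j; simp [rmat, cmat]

lemma isUnit_cmat (hs : 1 ≤ s) (M : Matrix (Fin s) (Fin s) ℤ)
    (hMexp : ∀ μ ∈ spectrum ℂ (M.map (fun a => (a : ℂ))), 1 < ‖μ‖) :
    IsUnit (cmat M) := by
  by_contra h
  have h0 : (0 : ℂ) ∈ spectrum ℂ (M.map (fun a => (a : ℂ))) := (spectrum.zero_mem_iff ℂ).mpr h
  have := hMexp 0 h0
  simp only [norm_zero] at this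
  linarith

lemma isUnit_det_rmat (hs : 1 ≤ s) (M : Matrix (Fin s) (Fin s) ℤ)
    (hMexp : ∀ μ ∈ spectrum ℂ (M.map (fun a => (a : ℂ))), 1 < ‖μ‖) :
    IsUnit (rmat M).det := by
  have hu := isUnit_cmat hs M hMexp
  have hdet : IsUnit (cmat M).det := (Matrix.isUnit_iff_isUnit_det _).mp hu
  have h1 : (cmat M).det = ((M.det : ℤ) : ℂ) := by
    rw [show (cmat M) = (Int.castRingHom ℂ).mapMatrix M from rfl,
      ← RingHom.map_det]; rfl
  have h2 : (rmat M).det = ((M.det : ℤ) : ℝ) := by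
    rw [show (rmat M) = (Int.castRingHom ℝ).mapMatrix M from rfl,
      ← RingHom.map_det]; rfl
  rw [h2]
  rw [h1] at hdet
  have : (M.det : ℂ) ≠ 0 := hdet.ne_zero
  have : (M.det : ℝ) ≠ 0 := by
    simpa using fun hh => this (by exact_mod_cast hh)
  exact this.isUnit

variable (M : Matrix (Fin s) (Fin s) ℤ)

lemma rmat_mul_inv (h : IsUnit (rmat M).det) : rmat M * (rmat M)⁻¹ = 1 :=
  Matrix.mul_nonsing_inv _ h

lemma rmat_inv_mul (h : IsUnit (rmat M).det) : (rmat M)⁻¹ * rmat M = 1 :=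
  Matrix.nonsing_inv_mul _ h

/-- Geometric decay of powers of the inverse. -/
lemma decay (hs : 1 ≤ s)
    (hMexp : ∀ μ ∈ spectrum ℂ (M.map (fun a => (a : ℂ))), 1 < ‖μ‖) :
    ∃ C t : ℝ, 1 ≤ C ∧ 0 < t ∧ t < 1 ∧
      ∀ (n : ℕ) (x : Fin s → ℝ), ‖((rmat M)⁻¹ ^ n).mulVec x‖ ≤ C * t ^ n * ‖x‖ := by
  classical
  have hdet := isUnit_det_rmat hs M hMexp
  set R : Matrix (Fin s) (Fin s) ℝ := rmat M with hR
  set A : Matrix (Fin s) (Fin s) ℝ := R⁻¹ with hA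
  set Ac : Matrix (Fin s) (Fin s) ℂ := A.map (algebraMap ℝ ℂ) with hAc
  have hMA : cmat M * Ac = 1 := by
    rw [cmat_eq, hAc, ← Matrix.map_mul, rmat_mul_inv M hdet, Matrix.map_one] <;> simp
  have hAM : Ac * cmat M = 1 := by
    rw [cmat_eq, hAc, ← Matrix.map_mul, rmat_inv_mul M hdet, Matrix.map_one] <;> simp
  haveI : Nonempty (Fin s) := Fin.pos_iff_nonempty.mp hs
  haveI : CompleteSpace (Matrix (Fin s) (Fin s) ℂ) := FiniteDimensional.complete ℂ _
  -- all spectrum points of Ac have nnnorm < 1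
  have hspecA : ∀ z ∈ spectrum ℂ Ac, ‖z‖₊ < 1 := by
    intro z hz
    have hzne : z ≠ 0 := by
      intro h0
      have : ¬ IsUnit Ac := spectrum.not_isUnit_of_zero_mem (R := ℂ) (by rwa [h0] at hz)
      exact this ⟨⟨Ac, cmat M, hAM, hMA⟩, rfl⟩
    set u : (Matrix (Fin s) (Fin s) ℂ)ˣ := ⟨cmat M, Ac, hMA, hAM⟩ with hu
    have hzmem : (↑((Units.mk0 z hzne)⁻¹) : ℂ) ∈ spectrum ℂ ((↑u⁻¹⁻¹ : Matrix (Fin s) (Fin s) ℂ)) := by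
      refine (spectrum.inv_mem_iff).mp ?_
      simpa [u] using hz
    have hinv : ((Units.mk0 z hzne)⁻¹ : ℂˣ) = (z⁻¹ : ℂ) := rfl
    have hmem2 : (z⁻¹ : ℂ) ∈ spectrum ℂ (M.map (fun a => (a : ℂ))) := by
      have : (↑(u⁻¹⁻¹) : Matrix (Fin s) (Fin s) ℂ) = cmat M := by simp [u]
      rw [this] at hzmem
      simpa [hinv] using hzmem
    have h1 := hMexp _ hmem2
    rw [norm_inv] at h1
    have hz1 : ‖z‖ < 1 := by
      have habs : 0 < ‖z‖ := by simpa using hzne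
      rw [lt_inv_comm₀ (by norm_num) habs] at h1
      linarith [h1]
    have : ‖z‖ < 1 := by simpa using hz1
    exact_mod_cast this
  have hsr : spectralRadius ℂ Ac < 1 := by
    have := spectrum.spectralRadius_lt_of_forall_lt (a := Ac) (r := 1) hspecA
    simpa using this
  obtain ⟨r, hr1, hr2⟩ := ENNReal.lt_iff_exists_nnreal_btwn.mp hsr
  have hrlt1 : (r : ℝ) < 1 := by exact_mod_cast hr2
  -- Gelfand
  have hG := spectrum.pow_nnnorm_pow_one_div_tendsto_nhds_spectralRadius Ac
  have hev : ∀ᶠ n : ℕ in atTop, (‖Ac ^ n‖₊ : ENNReal) ^ (1 / (n : ℝ)) < r :=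
    hG.eventually_lt_const hr1
  obtain ⟨N, hN⟩ := (hev.and (eventually_ge_atTop 1)).exists_forall_of_atTop
  -- norms of real powers equal complex powers
  have hmapPow : ∀ n : ℕ, Ac ^ n = (A ^ n).map (algebraMap ℝ ℂ) := by
    intro n
    induction n with
    | zero => simp [Matrix.map_one]
    | succ k ih => rw [pow_succ, pow_succ, ih, Matrix.map_mul]
  have hnormEq : ∀ n : ℕ, ‖A ^ n‖₊ = ‖Ac ^ n‖₊ := by
    intro n
    rw [hmapPow n, Matrix.linfty_opNNNorm_def, Matrix.linfty_opNNNorm_def]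
    congr 1
    ext i
    congr 1
    ext j
    simp [Matrix.map_apply]
    
  have hbound : ∀ n, N ≤ n → ‖A ^ n‖ ≤ (r : ℝ) ^ n := by
    intro n hn
    obtain ⟨h1, h2⟩ := hN n hn
    have hne : (n : ℝ) ≠ 0 := by positivity
    have hle : (‖Ac ^ n‖₊ : ENNReal) ≤ (r : ENNReal) ^ (n : ℕ) := by
      have h3 : ((‖Ac ^ n‖₊ : ℝ≥0∞) ^ ((1:ℝ)/(n:ℝ))) ^ (n:ℝ) ≤ (r : ℝ≥0∞) ^ (n:ℝ) :=
        ENNReal.rpow_le_rpow h1.le (by positivity)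
      rw [← ENNReal.rpow_mul, one_div, inv_mul_cancel₀ hne, ENNReal.rpow_one] at h3
      calc (‖Ac ^ n‖₊ : ℝ≥0∞) ≤ (r : ℝ≥0∞) ^ (n:ℝ) := h3
        _ = (r:ℝ≥0∞) ^ (n:ℕ) := by rw [← ENNReal.rpow_natCast]
    have : ‖Ac ^ n‖₊ ≤ r ^ n := by
      have := hle
      rw [← ENNReal.coe_pow] at this
      exact_mod_cast this
    have hreal : ‖A ^ n‖₊ ≤ r ^ n := by rw [hnormEq]; exact this
    have h4 : ((‖A ^ n‖₊ : ℝ≥0) : ℝ) ≤ (((r ^ n : ℝ≥0)) : ℝ) := by exact_mod_cast hreal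
    simpa [coe_nnnorm, NNReal.coe_pow] using h4
  -- choose C
  set C : ℝ := 1 + ∑ k ∈ Finset.range N, ‖A ^ k‖ / (r : ℝ) ^ k with hC
  have hrpos : (0 : ℝ) < r := by
    have h := lt_of_le_of_lt (show (0:ℝ≥0∞) ≤ spectralRadius ℂ Ac from zero_le) hr1
    have h' : (0:ℝ≥0) < r := by exact_mod_cast h
    exact_mod_cast h'
  have hCpos : 1 ≤ C := by
    have : (0:ℝ) ≤ ∑ k ∈ Finset.range N, ‖A ^ k‖ / (r : ℝ) ^ k :=
      Finset.sum_nonneg fun k _ => by positivity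
    simp [hC]; linarith
  have hCn : ∀ n, ‖A ^ n‖ ≤ C * (r : ℝ) ^ n := by
    intro n
    by_cases hn : N ≤ n
    · calc ‖A ^ n‖ ≤ (r:ℝ) ^ n := hbound n hn
        _ ≤ C * (r:ℝ) ^ n := le_mul_of_one_le_left (by positivity) hCpos
    · push_neg at hn
      have hterm : ‖A ^ n‖ / (r : ℝ) ^ n ≤ ∑ k ∈ Finset.range N, ‖A ^ k‖ / (r : ℝ) ^ k :=
        Finset.single_le_sum (f := fun k => ‖A ^ k‖ / (r:ℝ) ^ k)
          (fun k _ => by positivity) (Finset.mem_range.mpr hn)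
      have : ‖A ^ n‖ / (r : ℝ) ^ n ≤ C := by simp [hC]; linarith
      calc ‖A ^ n‖ = (‖A ^ n‖ / (r:ℝ)^n) * (r:ℝ)^n := by field_simp
        _ ≤ C * (r:ℝ)^n := by
            have : (0:ℝ) < (r:ℝ)^n := by positivity
            nlinarith [this]
  refine ⟨C, r, hCpos, hrpos, hrlt1, ?_⟩
  intro n x
  calc ‖(A ^ n).mulVec x‖ ≤ ‖A ^ n‖ * ‖x‖ := Matrix.linfty_opNorm_mulVec _ _
    _ ≤ C * (r:ℝ) ^ n * ‖x‖ := by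
        have := hCn n
        have hx : (0:ℝ) ≤ ‖x‖ := norm_nonneg _
        nlinarith

section Part2

variable {s : ℕ} {M : Matrix (Fin s) (Fin s) ℤ} {C t : ℝ}

/-- generic attractor of the IFS given by digit set S -/
def attr (M : Matrix (Fin s) (Fin s) ℤ) (S : Finset (Fin s → ℤ)) : Set (Fin s → ℝ) :=
  {x | ∃ f : ℕ → (Fin s → ℤ), (∀ i, f i ∈ S) ∧
    x = ∑' i : ℕ, (((M.map (Int.cast : ℤ → ℝ))⁻¹) ^ (i + 1)).mulVec (icast (f i))}

lemma finset_icast_bound (S : Finset (Fin s → ℤ)) :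
    ∃ B : ℝ, 0 ≤ B ∧ ∀ x ∈ S, ‖icast x‖ ≤ B := by
  refine ⟨∑ x ∈ S, ‖icast x‖, Finset.sum_nonneg fun x _ => norm_nonneg _, fun x hx => ?_⟩
  exact Finset.single_le_sum (f := fun x => ‖icast x‖) (fun y _ => norm_nonneg _) hx

variable (hC : 1 ≤ C) (ht : 0 < t) (ht1 : t < 1)
  (hdec : ∀ (n : ℕ) (x : Fin s → ℝ), ‖((rmat M)⁻¹ ^ n).mulVec x‖ ≤ C * t ^ n * ‖x‖)

include hC ht ht1 hdec

lemma summable_digits {f : ℕ → Fin s → ℤ} {B : ℝ} (hB : ∀ i, ‖icast (f i)‖ ≤ B) :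
    Summable (fun i : ℕ => ((rmat M)⁻¹ ^ (i + 1)).mulVec (icast (f i))) := by
  have hB0 : 0 ≤ B := le_trans (norm_nonneg _) (hB 0)
  refine Summable.of_norm_bounded (g := fun i => (C * B * t) * t ^ i) ?_ ?_
  · exact (summable_geometric_of_lt_one ht.le ht1).mul_left _
  · intro i
    calc ‖((rmat M)⁻¹ ^ (i + 1)).mulVec (icast (f i))‖ ≤ C * t ^ (i+1) * ‖icast (f i)‖ :=
        hdec (i+1) _
      _ ≤ C * t ^ (i+1) * B := by
          have : (0:ℝ) ≤ C * t ^ (i+1) := by positivity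
          exact mul_le_mul_of_nonneg_left (hB i) this
      _ = (C * B * t) * t ^ i := by ring

lemma tsum_digits_norm_le {f : ℕ → Fin s → ℤ} {B : ℝ} (hB : ∀ i, ‖icast (f i)‖ ≤ B) :
    ‖∑' i : ℕ, ((rmat M)⁻¹ ^ (i + 1)).mulVec (icast (f i))‖ ≤ C * B * t * (1 - t)⁻¹ := by
  have hB0 : 0 ≤ B := le_trans (norm_nonneg _) (hB 0)
  have hsum := summable_digits hC ht ht1 hdec hB
  have hnorm : ∀ i : ℕ, ‖((rmat M)⁻¹ ^ (i + 1)).mulVec (icast (f i))‖ ≤ (C * B * t) * t ^ i := by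
    intro i
    calc ‖((rmat M)⁻¹ ^ (i + 1)).mulVec (icast (f i))‖ ≤ C * t ^ (i+1) * ‖icast (f i)‖ :=
        hdec (i+1) _
      _ ≤ C * t ^ (i+1) * B := by
          have : (0:ℝ) ≤ C * t ^ (i+1) := by positivity
          exact mul_le_mul_of_nonneg_left (hB i) this
      _ = (C * B * t) * t ^ i := by ring
  have hgeo : Summable (fun i : ℕ => (C * B * t) * t ^ i) :=
    (summable_geometric_of_lt_one ht.le ht1).mul_left _
  have hnorms : Summable (fun i : ℕ => ‖((rmat M)⁻¹ ^ (i + 1)).mulVec (icast (f i))‖) :=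
    Summable.of_nonneg_of_le (fun i => norm_nonneg _) hnorm hgeo
  calc ‖∑' i : ℕ, ((rmat M)⁻¹ ^ (i + 1)).mulVec (icast (f i))‖
      ≤ ∑' i : ℕ, ‖((rmat M)⁻¹ ^ (i + 1)).mulVec (icast (f i))‖ :=
        norm_tsum_le_tsum_norm hnorms
    _ ≤ ∑' i : ℕ, (C * B * t) * t ^ i := Summable.tsum_le_tsum hnorm hnorms hgeo
    _ = (C * B * t) * (1 - t)⁻¹ := by
        rw [tsum_mul_left, tsum_geometric_of_lt_one ht.le ht1]
    _ = C * B * t * (1 - t)⁻¹ := by ring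

lemma attr_bounded (S : Finset (Fin s → ℤ)) :
    ∃ R : ℝ, 0 ≤ R ∧ ∀ x ∈ attr M S, ‖x‖ ≤ R := by
  obtain ⟨B, hB0, hB⟩ := finset_icast_bound S
  have h1t : (0:ℝ) < 1 - t := by linarith
  refine ⟨C * B * t * (1 - t)⁻¹, by positivity, ?_⟩
  rintro x ⟨f, hf, rfl⟩
  exact tsum_digits_norm_le hC ht ht1 hdec (fun i => hB _ (hf i))

/-- the continuous linear map given by `(rmat M)⁻¹`. -/
lemma tsum_digits_shift {f : ℕ → Fin s → ℤ} {B : ℝ} (hB : ∀ i, ‖icast (f i)‖ ≤ B) :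
    (∑' i : ℕ, ((rmat M)⁻¹ ^ (i + 1)).mulVec (icast (f i)))
      = (rmat M)⁻¹.mulVec
          ((∑' i : ℕ, ((rmat M)⁻¹ ^ (i + 1)).mulVec (icast (f (i + 1)))) + icast (f 0)) := by
  have hsum := summable_digits hC ht ht1 hdec hB
  have hsumtail : Summable (fun i : ℕ => ((rmat M)⁻¹ ^ (i + 1)).mulVec (icast (f (i + 1)))) := by
    refine summable_digits hC ht ht1 hdec (B := B) ?_
    intro i; exact hB (i+1)
  rw [Summable.tsum_eq_zero_add hsum]
  have hterm : ∀ i : ℕ, ((rmat M)⁻¹ ^ (i + 1 + 1)).mulVec (icast (f (i + 1)))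
      = (rmat M)⁻¹.mulVec (((rmat M)⁻¹ ^ (i + 1)).mulVec (icast (f (i + 1)))) := by
    intro i
    rw [Matrix.mulVec_mulVec, ← pow_succ']
  calc ((rmat M)⁻¹ ^ (0 + 1)).mulVec (icast (f 0))
        + ∑' i : ℕ, ((rmat M)⁻¹ ^ (i + 1 + 1)).mulVec (icast (f (i + 1)))
      = (rmat M)⁻¹.mulVec (icast (f 0))
        + ∑' i : ℕ, (rmat M)⁻¹.mulVec (((rmat M)⁻¹ ^ (i + 1)).mulVec (icast (f (i + 1)))) := by
        rw [tsum_congr hterm]; simp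
    _ = (rmat M)⁻¹.mulVec (icast (f 0))
        + (rmat M)⁻¹.mulVec (∑' i : ℕ, ((rmat M)⁻¹ ^ (i + 1)).mulVec (icast (f (i + 1)))) := by
        congr 1
        have hlin := (LinearMap.toContinuousLinearMap
          (Matrix.mulVecLin ((rmat M)⁻¹))).map_tsum hsumtail
        simpa using hlin.symm
    _ = (rmat M)⁻¹.mulVec
          ((∑' i : ℕ, ((rmat M)⁻¹ ^ (i + 1)).mulVec (icast (f (i + 1)))) + icast (f 0)) := by
        rw [Matrix.mulVec_add]
        abel

lemma attr_shift {S : Finset (Fin s → ℤ)} {d : Fin s → ℤ} (hd : d ∈ S) {x : Fin s → ℝ}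
    (hx : x ∈ attr M S) : (rmat M)⁻¹.mulVec (x + icast d) ∈ attr M S := by
  obtain ⟨f, hf, rfl⟩ := hx
  obtain ⟨B, hB0, hB⟩ := finset_icast_bound S
  set g : ℕ → (Fin s → ℤ) := fun i => match i with
    | 0 => d
    | (j+1) => f j with hg
  have hgmem : ∀ i, g i ∈ S := by
    intro i; cases i with
    | zero => exact hd
    | succ j => exact hf j
  refine ⟨g, hgmem, ?_⟩
  exact (tsum_digits_shift hC ht ht1 hdec (f := g) (B := B) (fun i => hB _ (hgmem i))).symm

lemma attr_decomp {S : Finset (Fin s → ℤ)} {x : Fin s → ℝ} (hx : x ∈ attr M S) :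
    ∃ d ∈ S, ∃ y ∈ attr M S, x = (rmat M)⁻¹.mulVec (y + icast d) := by
  obtain ⟨f, hf, rfl⟩ := hx
  obtain ⟨B, hB0, hB⟩ := finset_icast_bound S
  refine ⟨f 0, hf 0, ∑' i : ℕ, ((rmat M)⁻¹ ^ (i + 1)).mulVec (icast (f (i + 1))),
    ⟨fun i => f (i+1), fun i => hf (i+1), rfl⟩, ?_⟩
  exact tsum_digits_shift hC ht ht1 hdec (fun i => hB _ (hf i))

lemma attr_compact (S : Finset (Fin s → ℤ)) : IsCompact (attr M S) := by
  classical
  obtain ⟨B, hB0, hB⟩ := finset_icast_bound S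
  by_cases hS : S.Nonempty
  · haveI : Nonempty {d // d ∈ S} := ⟨⟨hS.choose, hS.choose_spec⟩⟩
    set Φ : (ℕ → {d // d ∈ S}) → (Fin s → ℝ) := fun f =>
      ∑' i : ℕ, ((rmat M)⁻¹ ^ (i + 1)).mulVec (icast (f i).1) with hPhi
    have hcont : Continuous Φ := by
      refine continuous_tsum ?_ ((summable_geometric_of_lt_one ht.le ht1).mul_left (C * B * t)) ?_
      · intro i
        have h1 : Continuous fun f : (ℕ → {d // d ∈ S}) => (f i : Fin s → ℤ) := by
          have := (continuous_apply (A := fun _ : ℕ => {d // d ∈ S}) i)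
          exact continuous_subtype_val.comp this
        have h2 : Continuous fun k : Fin s → ℤ =>
            ((rmat M)⁻¹ ^ (i + 1)).mulVec (icast k) := continuous_of_discreteTopology
        exact h2.comp h1
      · intro i f
        calc ‖((rmat M)⁻¹ ^ (i + 1)).mulVec (icast (f i).1)‖
            ≤ C * t ^ (i+1) * ‖icast (f i).1‖ := hdec (i+1) _
          _ ≤ C * t ^ (i+1) * B := by
              have : (0:ℝ) ≤ C * t ^ (i+1) := by positivity
              exact mul_le_mul_of_nonneg_left (hB _ (f i).2) this
          _ = (C * B * t) * t ^ i := by ring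
    have himg : attr M S = Set.range Φ := by
      ext x
      constructor
      · rintro ⟨f, hf, rfl⟩
        exact ⟨fun i => ⟨f i, hf i⟩, rfl⟩
      · rintro ⟨f, rfl⟩
        exact ⟨fun i => (f i).1, fun i => (f i).2, rfl⟩
    rw [himg]
    exact isCompact_range hcont
  · have hempty : attr M S = ∅ := by
      rw [Finset.not_nonempty_iff_eq_empty] at hS
      refine Set.eq_empty_of_forall_notMem ?_
      rintro x ⟨f, hf, -⟩
      have := hf 0
      simp [hS] at this
    rw [hempty]
    exact isCompact_empty

end Part2

section Part3

variable {s : ℕ} {M : Matrix (Fin s) (Fin s) ℤ} {C t : ℝ}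

lemma icast_add (a b : Fin s → ℤ) : icast (a + b) = icast a + icast b := by
  funext j; simp [icast]

lemma icast_sub (a b : Fin s → ℤ) : icast (a - b) = icast a - icast b := by
  funext j; simp [icast]

lemma icast_mulVec (M : Matrix (Fin s) (Fin s) ℤ) (k : Fin s → ℤ) :
    icast (M.mulVec k) = (rmat M).mulVec (icast k) := by
  funext j
  simp only [icast, Matrix.mulVec, dotProduct, rmat, Matrix.map_apply]
  push_cast
  rfl

variable (hC : 1 ≤ C) (ht : 0 < t) (ht1 : t < 1)
  (hdec : ∀ (n : ℕ) (x : Fin s → ℝ), ‖((rmat M)⁻¹ ^ n).mulVec x‖ ≤ C * t ^ n * ‖x‖)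
  (hdet : IsUnit (rmat M).det)

include hdet in
lemma inv_mulVec_rmat_mulVec (v : Fin s → ℝ) :
    (rmat M)⁻¹.mulVec ((rmat M).mulVec v) = v := by
  rw [Matrix.mulVec_mulVec, Matrix.nonsing_inv_mul _ hdet, Matrix.one_mulVec]

include hdet in
lemma rmat_mulVec_inv_mulVec (v : Fin s → ℝ) :
    (rmat M).mulVec ((rmat M)⁻¹.mulVec v) = v := by
  rw [Matrix.mulVec_mulVec, Matrix.mul_nonsing_inv _ hdet, Matrix.one_mulVec]

include hdet in
lemma pow_inv_mulVec_pow (n : ℕ) (v : Fin s → ℝ) :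
    ((rmat M)⁻¹ ^ n).mulVec ((rmat M ^ n).mulVec v) = v := by
  induction n with
  | zero => simp [Matrix.one_mulVec]
  | succ k ih =>
      rw [Matrix.mulVec_mulVec] at ih ⊢
      have : (rmat M)⁻¹ ^ (k+1) * rmat M ^ (k+1)
          = (rmat M)⁻¹ ^ k * ((rmat M)⁻¹ * rmat M) * rmat M ^ k := by
        rw [pow_succ, pow_succ']; simp only [mul_assoc]
      rw [this, Matrix.nonsing_inv_mul _ hdet, mul_one]
      exact ih

include hC ht ht1 hdec hdet in
/-- the support of the refinable function is contained in the attractor of `supp c`. -/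
lemma support_subset_attr {c : (Fin s → ℤ) → ℝ} (hcfin : (Function.support c).Finite)
    {φ : (Fin s → ℝ) → ℝ} (hφc : HasCompactSupport φ)
    (hφeq : ∀ x, φ x = ∑ᶠ k : Fin s → ℤ,
      c k * φ ((M.map (Int.cast : ℤ → ℝ)).mulVec x - icast k))
    {x : Fin s → ℝ} (hx : φ x ≠ 0) : x ∈ attr M hcfin.toFinset := by
  classical
  -- bound on the support of φ
  obtain ⟨Rφ, hRφ⟩ := hφc.isCompact.isBounded.subset_closedBall 0
  have hsupp : ∀ y : Fin s → ℝ, φ y ≠ 0 → ‖y‖ ≤ Rφ := by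
    intro y hy
    have : y ∈ tsupport φ := subset_tsupport φ hy
    have := hRφ this
    simpa [Metric.mem_closedBall, dist_eq_norm] using this
  have hRφ0 : 0 ≤ Rφ := le_trans (norm_nonneg _) (hsupp x hx)
  -- one step of the refinement equation
  have step : ∀ y : Fin s → ℝ, φ y ≠ 0 →
      ∃ γ : Fin s → ℤ, γ ∈ hcfin.toFinset ∧ φ ((rmat M).mulVec y - icast γ) ≠ 0 := by
    intro y hy
    by_contra hcon
    push_neg at hcon
    apply hy
    rw [hφeq y]
    apply finsum_eq_zero_of_forall_eq_zero
    intro k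
    by_cases hk : c k = 0
    · simp [hk]
    · have hk' : k ∈ hcfin.toFinset := hcfin.mem_toFinset.mpr hk
      rw [show φ ((M.map (Int.cast : ℤ → ℝ)).mulVec y - icast k) = 0 from hcon k hk', mul_zero]
  -- iterate: construct the sequence of digits
  let Next : {y : Fin s → ℝ // φ y ≠ 0} → {y : Fin s → ℝ // φ y ≠ 0} × (Fin s → ℤ) :=
    fun y => ⟨⟨(rmat M).mulVec y.1 - icast (step y.1 y.2).choose,
      (step y.1 y.2).choose_spec.2⟩, (step y.1 y.2).choose⟩
  let F : ℕ → {y : Fin s → ℝ // φ y ≠ 0} := fun n => Nat.rec ⟨x, hx⟩ (fun _ p => (Next p).1) n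
  let γ : ℕ → (Fin s → ℤ) := fun n => (Next (F n)).2
  have hγmem : ∀ n, γ n ∈ hcfin.toFinset := fun n => (step (F n).1 (F n).2).choose_spec.1
  have hFrec : ∀ n, (F (n+1)).1 = (rmat M).mulVec (F n).1 - icast (γ n) := fun n => rfl
  -- partial sums
  have hpart : ∀ n : ℕ, x = (∑ i ∈ Finset.range n, ((rmat M)⁻¹ ^ (i+1)).mulVec (icast (γ i)))
      + ((rmat M)⁻¹ ^ n).mulVec ((F n).1) := by
    intro n
    induction n with
    | zero => simp [Matrix.one_mulVec, F]
    | succ k ih =>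
        rw [Finset.sum_range_succ]
        have hstep : ((rmat M)⁻¹ ^ k).mulVec ((F k).1)
            = ((rmat M)⁻¹ ^ (k+1)).mulVec (icast (γ k))
              + ((rmat M)⁻¹ ^ (k+1)).mulVec ((F (k+1)).1) := by
          have h1 : (F k).1 = (rmat M)⁻¹.mulVec (icast (γ k) + (F (k+1)).1) := by
            rw [hFrec k, show icast (γ k) + ((rmat M).mulVec (F k).1 - icast (γ k))
              = (rmat M).mulVec (F k).1 by abel,
              inv_mulVec_rmat_mulVec (M := M) hdet]
          rw [h1, Matrix.mulVec_mulVec, ← pow_succ, Matrix.mulVec_add]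
        rw [ih, hstep]
        abel
  -- summability of the digit series
  obtain ⟨B, hB0, hB⟩ := finset_icast_bound hcfin.toFinset
  have hsum := summable_digits hC ht ht1 hdec (f := γ) (B := B) (fun i => hB _ (hγmem i))
  -- the tail goes to 0
  have htail : Filter.Tendsto (fun n : ℕ => ((rmat M)⁻¹ ^ n).mulVec ((F n).1))
      Filter.atTop (nhds 0) := by
    have hb : ∀ n : ℕ, ‖((rmat M)⁻¹ ^ n).mulVec ((F n).1)‖ ≤ (C * Rφ) * t ^ n := by
      intro n
      calc ‖((rmat M)⁻¹ ^ n).mulVec ((F n).1)‖ ≤ C * t ^ n * ‖(F n).1‖ := hdec n _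
        _ ≤ C * t ^ n * Rφ := by
            have : (0:ℝ) ≤ C * t ^ n := by positivity
            exact mul_le_mul_of_nonneg_left (hsupp _ (F n).2) this
        _ = (C * Rφ) * t ^ n := by ring
    have hgeo : Filter.Tendsto (fun n : ℕ => (C * Rφ) * t ^ n) Filter.atTop (nhds 0) := by
      have := tendsto_pow_atTop_nhds_zero_of_lt_one ht.le ht1
      simpa using this.const_mul (C * Rφ)
    refine squeeze_zero_norm hb hgeo
  -- partial sums tend to x
  have hps : Filter.Tendsto
      (fun n : ℕ => ∑ i ∈ Finset.range n, ((rmat M)⁻¹ ^ (i+1)).mulVec (icast (γ i)))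
      Filter.atTop (nhds x) := by
    have : ∀ n : ℕ, ∑ i ∈ Finset.range n, ((rmat M)⁻¹ ^ (i+1)).mulVec (icast (γ i))
        = x - ((rmat M)⁻¹ ^ n).mulVec ((F n).1) := by
      intro n
      rw [hpart n]
      abel
    simp_rw [this]
    simpa using tendsto_const_nhds.sub htail
  have hps' := hsum.hasSum.tendsto_sum_nat
  have := tendsto_nhds_unique hps hps'
  exact ⟨γ, fun i => hγmem i, this⟩

include hdet in
lemma attr_inv_mulVec_step {D : Finset (Fin s → ℤ)}
    (hDrep : ∀ x : Fin s → ℤ, ∃! d, d ∈ D ∧ ∃ y : Fin s → ℤ, x = d + M.mulVec y)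
    (hC : 1 ≤ C) (ht : 0 < t) (ht1 : t < 1)
    (hdec : ∀ (n : ℕ) (x : Fin s → ℝ), ‖((rmat M)⁻¹ ^ n).mulVec x‖ ≤ C * t ^ n * ‖x‖)
    {z : Fin s → ℝ} (hz : ∃ k : Fin s → ℤ, z - icast k ∈ attr M D) :
    ∃ k' : Fin s → ℤ, (rmat M)⁻¹.mulVec z - icast k' ∈ attr M D := by
  obtain ⟨k, hk⟩ := hz
  obtain ⟨d, ⟨hdD, k', hkk⟩, -⟩ := hDrep k
  refine ⟨k', ?_⟩
  have hzdecomp : z = ((z - icast k) + icast d) + (rmat M).mulVec (icast k') := by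
    rw [← icast_mulVec]
    rw [show icast k = icast d + icast (M.mulVec k') by rw [← icast_add, ← hkk]]
    abel
  have : (rmat M)⁻¹.mulVec z
      = (rmat M)⁻¹.mulVec ((z - icast k) + icast d) + icast k' := by
    conv_lhs => rw [hzdecomp]
    rw [Matrix.mulVec_add, inv_mulVec_rmat_mulVec (M := M) hdet]
  rw [this]
  have hmem := attr_shift hC ht ht1 hdec (S := D) hdD hk
  simpa using hmem

include hC ht ht1 hdec hdet in
lemma attr_cover {D : Finset (Fin s → ℤ)} (hD0 : (0 : Fin s → ℤ) ∈ D)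
    (hDrep : ∀ x : Fin s → ℤ, ∃! d, d ∈ D ∧ ∃ y : Fin s → ℤ, x = d + M.mulVec y)
    (y : Fin s → ℝ) : ∃ m : Fin s → ℤ, y - icast m ∈ attr M D := by
  classical
  -- 0 is in the attractor
  have h0attr : (0 : Fin s → ℝ) ∈ attr M D := by
    refine ⟨fun _ => 0, fun _ => hD0, ?_⟩
    have : ∀ i : ℕ, ((rmat M)⁻¹ ^ (i+1)).mulVec (icast (0 : Fin s → ℤ)) = 0 := by
      intro i
      have : icast (0 : Fin s → ℤ) = 0 := by funext j; simp [icast]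
      rw [this, Matrix.mulVec_zero]
    rw [tsum_congr this, tsum_zero]
  -- integer points are covered
  have hint : ∀ w : Fin s → ℤ, ∃ k : Fin s → ℤ, icast w - icast k ∈ attr M D :=
    fun w => ⟨w, by simpa using h0attr⟩
  -- iterating the inverse step
  have hiter : ∀ (n : ℕ) (z : Fin s → ℝ), (∃ k : Fin s → ℤ, z - icast k ∈ attr M D) →
      ∃ k : Fin s → ℤ, ((rmat M)⁻¹ ^ n).mulVec z - icast k ∈ attr M D := by
    intro n
    induction n with
    | zero => intro z hz; simpa [Matrix.one_mulVec] using hz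
    | succ j ih =>
        intro z hz
        have h1 := ih z hz
        have h2 := attr_inv_mulVec_step (M := M) hdet hDrep hC ht ht1 hdec h1
        have : ((rmat M)⁻¹ ^ (j+1)).mulVec z
            = (rmat M)⁻¹.mulVec (((rmat M)⁻¹ ^ j).mulVec z) := by
          rw [Matrix.mulVec_mulVec, ← pow_succ']
        rw [this]
        exact h2
  -- the approximating sequence
  set flr : ℕ → (Fin s → ℤ) := fun n => fun j => ⌊((rmat M ^ n).mulVec y) j⌋ with hflr
  set tseq : ℕ → (Fin s → ℝ) := fun n => ((rmat M)⁻¹ ^ n).mulVec (icast (flr n)) with htseq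
  have herr : ∀ n : ℕ, ‖y - tseq n‖ ≤ C * t ^ n := by
    intro n
    have h1 : y - tseq n = ((rmat M)⁻¹ ^ n).mulVec ((rmat M ^ n).mulVec y - icast (flr n)) := by
      rw [Matrix.mulVec_sub, pow_inv_mulVec_pow (M := M) hdet]
    have hcomp : ∀ j, |((rmat M ^ n).mulVec y - icast (flr n)) j| ≤ 1 := by
      intro j
      have heq : ((rmat M ^ n).mulVec y - icast (flr n)) j
          = Int.fract (((rmat M ^ n).mulVec y) j) := rfl
      rw [heq, abs_of_nonneg (Int.fract_nonneg _)]
      exact (Int.fract_lt_one _).le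
    have h2 : ‖(rmat M ^ n).mulVec y - icast (flr n)‖ ≤ 1 := by
      refine (pi_norm_le_iff_of_nonneg (by norm_num)).mpr ?_
      intro j
      simpa [Real.norm_eq_abs] using hcomp j
    calc ‖y - tseq n‖ = ‖((rmat M)⁻¹ ^ n).mulVec ((rmat M ^ n).mulVec y - icast (flr n))‖ := by
          rw [h1]
      _ ≤ C * t ^ n * ‖(rmat M ^ n).mulVec y - icast (flr n)‖ := hdec n _
      _ ≤ C * t ^ n * 1 := by
          have : (0:ℝ) ≤ C * t ^ n := by positivity
          exact mul_le_mul_of_nonneg_left h2 this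
      _ = C * t ^ n := by ring
  have htmem : ∀ n : ℕ, ∃ k : Fin s → ℤ, tseq n - icast k ∈ attr M D := by
    intro n
    exact hiter n (icast (flr n)) (hint (flr n))
  set m : ℕ → (Fin s → ℤ) := fun n => (htmem n).choose with hm
  have hmspec : ∀ n, tseq n - icast (m n) ∈ attr M D := fun n => (htmem n).choose_spec
  -- bound on m
  obtain ⟨RG, hRG0, hRG⟩ := attr_bounded hC ht ht1 hdec D
  have htb : ∀ n, ‖tseq n‖ ≤ ‖y‖ + C := by
    intro n
    have := herr n
    have h5 : C * t ^ n ≤ C := by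
      have h6 : t ^ n ≤ 1 := pow_le_one₀ ht.le ht1.le
      nlinarith
    calc ‖tseq n‖ = ‖y - (y - tseq n)‖ := by congr 1; abel
      _ ≤ ‖y‖ + ‖y - tseq n‖ := norm_sub_le _ _
      _ ≤ ‖y‖ + C := by linarith
  have hmb : ∀ n, ‖icast (m n)‖ ≤ ‖y‖ + C + RG := by
    intro n
    calc ‖icast (m n)‖ = ‖tseq n - (tseq n - icast (m n))‖ := by congr 1; abel
      _ ≤ ‖tseq n‖ + ‖tseq n - icast (m n)‖ := norm_sub_le _ _
      _ ≤ (‖y‖ + C) + RG := add_le_add (htb n) (hRG _ (hmspec n))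
  -- the m n lie in a finite box
  set Bm : ℝ := ‖y‖ + C + RG with hBm
  set box : Finset (Fin s → ℤ) :=
    Finset.Icc (fun _ => -(⌈Bm⌉ + 1)) (fun _ => ⌈Bm⌉ + 1) with hbox
  have hmbox : ∀ n, m n ∈ box := by
    intro n
    rw [hbox, Finset.mem_Icc]
    constructor <;> [skip; skip] <;> (intro j)
    · have h7 : |((m n j : ℤ) : ℝ)| ≤ Bm := by
        have := norm_le_pi_norm (f := icast (m n)) j
        have h8 := hmb n
        simp only [icast, Real.norm_eq_abs] at this
        exact le_trans this h8
      have h9 : ((m n j : ℤ) : ℝ) ≥ -Bm := by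
        have := abs_le.mp h7
        linarith [this.1]
      have : (-(⌈Bm⌉ + 1) : ℤ) ≤ m n j := by
        have hceil : Bm ≤ (⌈Bm⌉ : ℝ) := Int.le_ceil Bm
        have : ((-(⌈Bm⌉ + 1) : ℤ) : ℝ) ≤ ((m n j : ℤ) : ℝ) := by push_cast; linarith
        exact_mod_cast this
      exact this
    · have h7 : |((m n j : ℤ) : ℝ)| ≤ Bm := by
        have := norm_le_pi_norm (f := icast (m n)) j
        have h8 := hmb n
        simp only [icast, Real.norm_eq_abs] at this
        exact le_trans this h8
      have h9 : ((m n j : ℤ) : ℝ) ≤ Bm := by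
        have := abs_le.mp h7
        linarith [this.2]
      have : m n j ≤ (⌈Bm⌉ + 1 : ℤ) := by
        have hceil : Bm ≤ (⌈Bm⌉ : ℝ) := Int.le_ceil Bm
        have : ((m n j : ℤ) : ℝ) ≤ ((⌈Bm⌉ + 1 : ℤ) : ℝ) := by push_cast; linarith
        exact_mod_cast this
      exact this
  -- pigeonhole
  haveI : Finite {v // v ∈ box} := inferInstance
  obtain ⟨m₀, hm₀⟩ := Finite.exists_infinite_fiber (fun n : ℕ => (⟨m n, hmbox n⟩ : {v // v ∈ box}))
  refine ⟨m₀.1, ?_⟩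
  have hfreq : ∃ᶠ n in Filter.atTop, tseq n - icast m₀.1 ∈ attr M D := by
    rw [Nat.frequently_atTop_iff_infinite]
    have hinf : {n : ℕ | (⟨m n, hmbox n⟩ : {v // v ∈ box}) = m₀}.Infinite := by
      rw [← Set.infinite_coe_iff]
      exact hm₀
    refine hinf.mono ?_
    intro n hn
    simp only [Set.mem_setOf_eq] at hn ⊢
    have : m n = m₀.1 := by
      have := congrArg Subtype.val hn
      simpa using this
    rw [← this]
    exact hmspec n
  have htends : Filter.Tendsto (fun n => tseq n - icast m₀.1) Filter.atTop
      (nhds (y - icast m₀.1)) := by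
    have h1 : Filter.Tendsto (fun n => y - tseq n) Filter.atTop (nhds 0) := by
      apply squeeze_zero_norm herr
      have := tendsto_pow_atTop_nhds_zero_of_lt_one ht.le ht1
      simpa using this.const_mul C
    have h2 : Filter.Tendsto tseq Filter.atTop (nhds y) := by
      have := tendsto_const_nhds (x := y) (f := Filter.atTop (α := ℕ)).sub h1
      simpa using this
    exact h2.sub tendsto_const_nhds
  exact ((attr_compact hC ht ht1 hdec D).isClosed).mem_of_frequently_of_tendsto hfreq htends

end Part3

section Part4

variable {s : ℕ}

/-- the fundamental cube -/
def cube (s : ℕ) : Set (Fin s → ℝ) := Set.univ.pi (fun _ : Fin s => Set.Ico (0:ℝ) 1)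

lemma cube_measurable : MeasurableSet (cube s) :=
  MeasurableSet.univ_pi (fun _ => measurableSet_Ico)

lemma cube_volume : volume (cube s) = 1 := by
  rw [cube, volume_pi_pi]
  simp [Real.volume_Ico]

lemma icast_neg (a : Fin s → ℤ) : icast (-a) = -icast a := by
  funext j; simp [icast]

lemma cube_unique_rep (x : Fin s → ℝ) : ∃! k : Fin s → ℤ, x - icast k ∈ cube s := by
  refine ⟨fun j => ⌊x j⌋, ?_, ?_⟩
  · intro j _
    rw [Set.mem_Ico]
    constructor
    · have := Int.floor_le (x j)
      simp only [Pi.sub_apply, icast]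
      linarith
    · have := Int.lt_floor_add_one (x j)
      simp only [Pi.sub_apply, icast]
      linarith
  · intro k hk
    funext j
    have := hk j (Set.mem_univ j)
    simp only [Set.mem_Ico] at this
    have h1 : (k j : ℝ) ≤ x j := by
      have := this.1
      simp [icast] at this
      linarith
    have h2 : x j < k j + 1 := by
      have := this.2
      simp [icast] at this
      linarith
    exact (Int.floor_eq_iff.mpr ⟨h1, h2⟩).symm

lemma indicator_shift (S : Set (Fin s → ℝ)) (k : Fin s → ℝ) (z : Fin s → ℝ) :
    S.indicator (fun _ => (1:ℝ≥0∞)) (z + k)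
      = ((fun w => w + k) ⁻¹' S).indicator (fun _ => (1:ℝ≥0∞)) z := by
  by_cases h : z + k ∈ S
  · rw [Set.indicator_of_mem h, Set.indicator_of_mem (by simpa using h)]
  · rw [Set.indicator_of_notMem h, Set.indicator_of_notMem (by simpa using h)]

/-- unfolding a measure as an integral over the fundamental cube -/
lemma volume_eq_lintegral_cube {S : Set (Fin s → ℝ)} (hS : MeasurableSet S) :
    volume S = ∫⁻ z in cube s, ∑' k : Fin s → ℤ,
      S.indicator (fun _ => (1:ℝ≥0∞)) (z + icast k) := by
  classical
  -- the translated cubes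
  set Ck : (Fin s → ℤ) → Set (Fin s → ℝ) := fun k => {x | x - icast k ∈ cube s} with hCk
  have hCkm : ∀ k, MeasurableSet (Ck k) := by
    intro k
    have : Ck k = (fun x => x - icast k) ⁻¹' cube s := rfl
    rw [this]
    exact cube_measurable.preimage (measurable_id.sub_const _)
  have hcover : (⋃ k : Fin s → ℤ, S ∩ Ck k) = S := by
    ext x
    simp only [Set.mem_iUnion, Set.mem_inter_iff]
    constructor
    · rintro ⟨k, hk, -⟩; exact hk
    · intro hx
      obtain ⟨k, hk, -⟩ := cube_unique_rep x
      exact ⟨k, hx, hk⟩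
  have hdisj : Pairwise (Function.onFun Disjoint (fun k => S ∩ Ck k)) := by
    intro k k' hkk'
    refine Set.disjoint_left.mpr ?_
    rintro x ⟨-, hx⟩ ⟨-, hx'⟩
    obtain ⟨k₀, -, huniq⟩ := cube_unique_rep x
    exact hkk' ((huniq k hx).trans (huniq k' hx').symm)
  have h1 : volume S = ∑' k : Fin s → ℤ, volume (S ∩ Ck k) := by
    conv_lhs => rw [← hcover]
    exact measure_iUnion hdisj (fun k => hS.inter (hCkm k))
  rw [h1]
  -- each piece is a translated slice of the cube
  have h2 : ∀ k : Fin s → ℤ, volume (S ∩ Ck k)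
      = volume (((fun z => z + icast k) ⁻¹' S) ∩ cube s) := by
    intro k
    have heq : S ∩ Ck k = (fun x => x + (- icast k)) ⁻¹' (((fun z => z + icast k) ⁻¹' S) ∩ cube s) := by
      ext x
      simp only [Set.mem_inter_iff, Set.mem_preimage, hCk, Set.mem_setOf_eq]
      have hxx : x + -icast k + icast k = x := by abel
      have hyy : x + -icast k = x - icast k := by abel
      rw [hxx, hyy]
    rw [heq]
    exact measure_preimage_add_right volume (-icast k) _
  rw [tsum_congr h2]
  -- rewrite as integrals
  have h3 : ∀ k : Fin s → ℤ, volume (((fun z => z + icast k) ⁻¹' S) ∩ cube s)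
      = ∫⁻ z in cube s, S.indicator (fun _ => (1:ℝ≥0∞)) (z + icast k) := by
    intro k
    have hpre : MeasurableSet ((fun z => z + icast k) ⁻¹' S) :=
      hS.preimage (measurable_id.add_const _)
    rw [show (∫⁻ z in cube s, S.indicator (fun _ => (1:ℝ≥0∞)) (z + icast k))
        = ∫⁻ z in cube s, ((fun w => w + icast k) ⁻¹' S).indicator (fun _ => (1:ℝ≥0∞)) z from
        lintegral_congr (fun z => indicator_shift S (icast k) z)]
    rw [lintegral_indicator hpre]
    simp [Measure.restrict_restrict hpre, Set.inter_comm]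
  rw [tsum_congr h3]
  -- swap sum and integral
  rw [← lintegral_tsum]
  intro k
  refine (Measurable.indicator measurable_const hS).comp ?_ |>.aemeasurable
  exact measurable_id.add_const _

/-- a.e. point is covered exactly once -/
lemma overlap_null {G : Set (Fin s → ℝ)} (hGm : MeasurableSet G)
    (hTile : volume G = 1)
    (hcov : ∀ y : Fin s → ℝ, ∃ m : Fin s → ℤ, y - icast m ∈ G)
    {m : Fin s → ℤ} (hm : m ≠ 0) :
    volume (G ∩ {x | x - icast m ∈ G}) = 0 := by
  classical
  set F : (Fin s → ℝ) → ℝ≥0∞ := fun z => ∑' k : Fin s → ℤ,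
    G.indicator (fun _ => (1:ℝ≥0∞)) (z + icast k) with hF
  have hFmeas : Measurable F := by
    apply Measurable.ennreal_tsum
    intro k
    exact (Measurable.indicator measurable_const hGm).comp (measurable_id.add_const _)
  have hFge : ∀ z, 1 ≤ F z := by
    intro z
    obtain ⟨m', hm'⟩ := hcov z
    have hterm : G.indicator (fun _ => (1:ℝ≥0∞)) (z + icast (-m')) = 1 := by
      rw [icast_neg]
      rw [Set.indicator_of_mem (by rw [show z + -icast m' = z - icast m' by abel]; exact hm')]
    calc (1:ℝ≥0∞) = G.indicator (fun _ => (1:ℝ≥0∞)) (z + icast (-m')) := hterm.symm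
      _ ≤ F z := ENNReal.le_tsum _
  have hint : ∫⁻ z in cube s, F z = 1 := by
    rw [hF, ← volume_eq_lintegral_cube hGm, hTile]
  -- F = 1 a.e. on the cube
  have hae : ∀ᵐ z ∂(volume.restrict (cube s)), F z = 1 := by
    have hsub : ∫⁻ z in cube s, (F z - 1) = 0 := by
      rw [lintegral_sub (measurable_const) ?hfin ?hle]
      · rw [hint]
        simp [Measure.restrict_apply MeasurableSet.univ, cube_volume]
      · simp [Measure.restrict_apply MeasurableSet.univ, cube_volume]
      · exact Filter.Eventually.of_forall (fun z => hFge z)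
    have := (lintegral_eq_zero_iff (hFmeas.sub measurable_const)).mp hsub
    filter_upwards [this] with z hz
    have h1 := hFge z
    simp only [Pi.zero_apply] at hz
    have h2 : F z ≤ 1 := tsub_eq_zero_iff_le.mp hz
    exact le_antisymm h2 h1
  -- the overlap set
  set E : Set (Fin s → ℝ) := G ∩ {x | x - icast m ∈ G} with hE
  have hEm : MeasurableSet E := by
    refine hGm.inter ?_
    exact hGm.preimage (measurable_id.sub_const _)
  rw [volume_eq_lintegral_cube hEm]
  -- the integrand vanishes a.e.
  have hvanish : ∀ᵐ z ∂(volume.restrict (cube s)),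
      (∑' k : Fin s → ℤ, E.indicator (fun _ => (1:ℝ≥0∞)) (z + icast k)) = 0 := by
    filter_upwards [hae] with z hz
    have hallzero : ∀ k : Fin s → ℤ, E.indicator (fun _ => (1:ℝ≥0∞)) (z + icast k) = 0 := by
      intro k
      by_contra hne
      have hkE : z + icast k ∈ E := by
        by_contra hnot
        exact hne (Set.indicator_of_notMem hnot _)
      obtain ⟨hkG, hkG'⟩ := hkE
      have hkG'' : z + icast (k - m) ∈ G := by
        rw [icast_sub]
        have : z + (icast k - icast m) = z + icast k - icast m := by abel
        rw [this]
        exact hkG'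
      have hne' : k ≠ k - m := by
        intro hh
        apply hm
        funext j
        have := congrFun hh j
        simp only [Pi.sub_apply, Pi.zero_apply] at this ⊢
        omega
      have h2le : (2:ℝ≥0∞) ≤ F z := by
        have hsumpair : ∑ k' ∈ ({k, k - m} : Finset (Fin s → ℤ)),
            G.indicator (fun _ => (1:ℝ≥0∞)) (z + icast k') = 2 := by
          rw [Finset.sum_pair hne']
          rw [Set.indicator_of_mem hkG, Set.indicator_of_mem hkG'']
          norm_num
        calc (2:ℝ≥0∞) = ∑ k' ∈ ({k, k - m} : Finset (Fin s → ℤ)),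
              G.indicator (fun _ => (1:ℝ≥0∞)) (z + icast k') := hsumpair.symm
          _ ≤ F z := ENNReal.sum_le_tsum _
      rw [hz] at h2le
      norm_num at h2le
    rw [tsum_congr hallzero, tsum_zero]
  calc ∫⁻ z in cube s, (∑' k : Fin s → ℤ, E.indicator (fun _ => (1:ℝ≥0∞)) (z + icast k))
      = ∫⁻ _ in cube s, 0 := lintegral_congr_ae hvanish
    _ = 0 := lintegral_zero

end Part4

section Part5

variable {s : ℕ} {M : Matrix (Fin s) (Fin s) ℤ} {C t : ℝ}

lemma interior_nonempty_of_cover {G : Set (Fin s → ℝ)} (hGc : IsClosed G)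
    (hcov : ∀ y : Fin s → ℝ, ∃ m : Fin s → ℤ, y - icast m ∈ G) :
    (interior G).Nonempty := by
  have hunion : (⋃ k : Fin s → ℤ, (fun x : Fin s → ℝ => x - icast k) ⁻¹' G) = Set.univ := by
    refine Set.eq_univ_of_forall ?_
    intro y
    obtain ⟨m, hm⟩ := hcov y
    exact Set.mem_iUnion.mpr ⟨m, hm⟩
  obtain ⟨k, x, hx⟩ := nonempty_interior_of_iUnion_of_closed
    (f := fun k : Fin s → ℤ => (fun x : Fin s → ℝ => x - icast k) ⁻¹' G)
    (fun k : Fin s → ℤ => hGc.preimage (continuous_sub_right (icast k))) hunion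
  have heq : (fun x : Fin s → ℝ => x - icast k) ⁻¹' G
      = (Homeomorph.subRight (icast k)) ⁻¹' G := rfl
  rw [heq, ← Homeomorph.preimage_interior] at hx
  exact ⟨_, hx⟩

variable (hC : 1 ≤ C) (ht : 0 < t) (ht1 : t < 1)
  (hdec : ∀ (n : ℕ) (x : Fin s → ℝ), ‖((rmat M)⁻¹ ^ n).mulVec x‖ ≤ C * t ^ n * ‖x‖)
  (hdet : IsUnit (rmat M).det)

include hdet in
lemma affine_step_eq_homeo (d : Fin s → ℤ) :
    ∃ h : (Fin s → ℝ) ≃ₜ (Fin s → ℝ),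
      (fun z : Fin s → ℝ => (rmat M)⁻¹.mulVec (z + icast d)) = ⇑h := by
  have h1 : ((rmat M)⁻¹.mulVecLin) ∘ₗ ((rmat M).mulVecLin) = LinearMap.id := by
    apply LinearMap.ext
    intro v
    simp only [LinearMap.comp_apply, Matrix.mulVecLin_apply, LinearMap.id_apply]
    exact inv_mulVec_rmat_mulVec (M := M) hdet v
  have h2 : ((rmat M).mulVecLin) ∘ₗ ((rmat M)⁻¹.mulVecLin) = LinearMap.id := by
    apply LinearMap.ext
    intro v
    simp only [LinearMap.comp_apply, Matrix.mulVecLin_apply, LinearMap.id_apply]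
    exact rmat_mulVec_inv_mulVec (M := M) hdet v
  set e : (Fin s → ℝ) ≃ₗ[ℝ] (Fin s → ℝ) :=
    LinearEquiv.ofLinear ((rmat M)⁻¹.mulVecLin) ((rmat M).mulVecLin) h1 h2 with he
  refine ⟨(Homeomorph.addRight (icast d)).trans e.toContinuousLinearEquiv.toHomeomorph, ?_⟩
  funext z
  rfl

include hC ht ht1 hdec hdet in
lemma interior_step {D : Finset (Fin s → ℤ)} {d : Fin s → ℤ} (hd : d ∈ D)
    {x : Fin s → ℝ} (hx : x ∈ interior (attr M D)) :
    (rmat M)⁻¹.mulVec (x + icast d) ∈ interior (attr M D) := by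
  obtain ⟨h, hh⟩ := affine_step_eq_homeo (M := M) hdet d
  have hmap : IsOpenMap (fun z : Fin s → ℝ => (rmat M)⁻¹.mulVec (z + icast d)) := by
    rw [hh]; exact h.isOpenMap
  have himg : (fun z : Fin s → ℝ => (rmat M)⁻¹.mulVec (z + icast d)) '' interior (attr M D)
      ⊆ attr M D := by
    rintro _ ⟨z, hz, rfl⟩
    exact attr_shift hC ht ht1 hdec hd (interior_subset hz)
  have hopen : IsOpen ((fun z : Fin s → ℝ => (rmat M)⁻¹.mulVec (z + icast d)) ''
      interior (attr M D)) := hmap _ isOpen_interior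
  exact interior_maximal himg hopen (Set.mem_image_of_mem _ hx)

include hC ht ht1 hdec hdet in
lemma attr_subset_closure_interior {D : Finset (Fin s → ℤ)}
    (hne : (interior (attr M D)).Nonempty) :
    attr M D ⊆ closure (interior (attr M D)) := by
  obtain ⟨g₀, hg₀⟩ := hne
  obtain ⟨RG, hRG0, hRG⟩ := attr_bounded hC ht ht1 hdec D
  have hcl : ∀ (n : ℕ), ∀ x ∈ attr M D, ∃ y ∈ interior (attr M D), ∃ z : Fin s → ℝ,
      y - x = ((rmat M)⁻¹ ^ n).mulVec z ∧ ‖z‖ ≤ 2 * RG := by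
    intro n
    induction n with
    | zero =>
        intro x hx
        refine ⟨g₀, hg₀, g₀ - x, by simp [Matrix.one_mulVec], ?_⟩
        calc ‖g₀ - x‖ ≤ ‖g₀‖ + ‖x‖ := norm_sub_le _ _
          _ ≤ RG + RG := add_le_add (hRG _ (interior_subset hg₀)) (hRG _ hx)
          _ = 2 * RG := by ring
    | succ k ih =>
        intro x hx
        obtain ⟨d, hd, x', hx', hxeq⟩ := attr_decomp hC ht ht1 hdec hx
        obtain ⟨y', hy', z, hz, hznorm⟩ := ih x' hx'
        refine ⟨(rmat M)⁻¹.mulVec (y' + icast d),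
          interior_step hC ht ht1 hdec hdet hd hy', z, ?_, hznorm⟩
        rw [hxeq]
        have : (rmat M)⁻¹.mulVec (y' + icast d) - (rmat M)⁻¹.mulVec (x' + icast d)
            = (rmat M)⁻¹.mulVec (y' - x') := by
          rw [← Matrix.mulVec_sub]
          congr 1
          abel
        rw [this, hz, Matrix.mulVec_mulVec, ← pow_succ']
  intro x hx
  have hseq : ∀ n : ℕ, ∃ y, y ∈ interior (attr M D) ∧ ‖y - x‖ ≤ (C * (2 * RG)) * t ^ n := by
    intro n
    obtain ⟨y, hy, z, hz, hznorm⟩ := hcl n x hx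
    refine ⟨y, hy, ?_⟩
    rw [hz]
    calc ‖((rmat M)⁻¹ ^ n).mulVec z‖ ≤ C * t ^ n * ‖z‖ := hdec n _
      _ ≤ C * t ^ n * (2 * RG) := by
          have : (0:ℝ) ≤ C * t ^ n := by positivity
          exact mul_le_mul_of_nonneg_left hznorm this
      _ = (C * (2 * RG)) * t ^ n := by ring
  set y : ℕ → (Fin s → ℝ) := fun n => (hseq n).choose with hy
  have hymem : ∀ n, y n ∈ interior (attr M D) := fun n => (hseq n).choose_spec.1
  have hybound : ∀ n, ‖y n - x‖ ≤ (C * (2 * RG)) * t ^ n := fun n => (hseq n).choose_spec.2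
  have htends : Filter.Tendsto y Filter.atTop (nhds x) := by
    rw [tendsto_iff_norm_sub_tendsto_zero]
    apply squeeze_zero_norm (fun n => by simpa using hybound n)
    have := tendsto_pow_atTop_nhds_zero_of_lt_one ht.le ht1
    simpa using this.const_mul (C * (2 * RG))
  exact mem_closure_of_tendsto htends (Filter.Eventually.of_forall hymem)

include hC ht ht1 hdec hdet in
/-- density of good points in the attractor -/
lemma dense_good_points {D : Finset (Fin s → ℤ)}
    (hTile : volume (attr M D) = 1)
    (hcov : ∀ y : Fin s → ℝ, ∃ m : Fin s → ℤ, y - icast m ∈ attr M D) :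
    ∀ x ∈ attr M D, x ∈ closure ((interior (attr M D)) \ (⋃ m : {m : Fin s → ℤ // m ≠ 0}, {x : Fin s → ℝ | x - icast m.1 ∈ attr M D})) := by
  classical
  set G := attr M D with hG
  have hGcmp : IsCompact G := attr_compact hC ht ht1 hdec D
  have hGm : MeasurableSet G := hGcmp.isClosed.measurableSet
  set Bad : Set (Fin s → ℝ) :=
    ⋃ m : {m : Fin s → ℤ // m ≠ 0}, {x : Fin s → ℝ | x - icast m.1 ∈ G} with hBad
  have hZ : volume (⋃ m : {m : Fin s → ℤ // m ≠ 0},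
      (G ∩ {x : Fin s → ℝ | x - icast m.1 ∈ G})) = 0 := by
    refine measure_iUnion_null ?_
    intro m
    exact overlap_null hGm hTile hcov m.2
  have hIG : interior G ⊆ closure (interior G \ Bad) := by
    intro ygood hygood
    rw [Metric.mem_closure_iff]
    intro ε hε
    obtain ⟨r, hr, hball⟩ := Metric.isOpen_iff.mp isOpen_interior ygood hygood
    set δ := min r ε with hδ
    have hδpos : 0 < δ := lt_min hr hε
    have hballδ : Metric.ball ygood δ ⊆ interior G :=
      le_trans (Metric.ball_subset_ball (min_le_left r ε)) hball
    have hnot : ¬ (Metric.ball ygood δ ⊆ Bad) := by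
      intro hcontra
      have hsub2 : Metric.ball ygood δ ⊆ ⋃ m : {m : Fin s → ℤ // m ≠ 0},
          (G ∩ {x : Fin s → ℝ | x - icast m.1 ∈ G}) := by
        intro w hw
        obtain ⟨T, ⟨m, rfl⟩, hmem⟩ := hcontra hw
        exact Set.mem_iUnion.mpr ⟨m, interior_subset (hballδ hw), hmem⟩
      have h1 : volume (Metric.ball ygood δ) ≤ 0 := le_trans (measure_mono hsub2) (le_of_eq hZ)
      have h2 : 0 < volume (Metric.ball ygood δ) :=
        Metric.measure_ball_pos volume ygood hδpos
      exact h2.ne' (le_antisymm h1 zero_le)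
    obtain ⟨w, hw, hwbad⟩ := Set.not_subset.mp hnot
    refine ⟨w, ⟨hballδ hw, hwbad⟩, ?_⟩
    have := Metric.mem_ball.mp hw
    rw [dist_comm] at this
    exact lt_of_lt_of_le this (min_le_right r ε)
  intro x hx
  have h1 : x ∈ closure (interior G) :=
    attr_subset_closure_interior hC ht ht1 hdec hdet
      (interior_nonempty_of_cover hGcmp.isClosed hcov) hx
  have h2 := closure_mono hIG h1
  rwa [closure_closure] at h2

end Part5

section Part6

variable {s : ℕ} {M : Matrix (Fin s) (Fin s) ℤ} {C t : ℝ}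

lemma Kset_eq_attr {c : (Fin s → ℤ) → ℝ} (hcfin : (Function.support c).Finite) :
    Kset s M c = attr M hcfin.toFinset := by
  ext x
  constructor
  · rintro ⟨γ, hγ, rfl⟩
    exact ⟨γ, fun j => hcfin.mem_toFinset.mpr (hγ j), rfl⟩
  · rintro ⟨γ, hγ, rfl⟩
    exact ⟨γ, fun j => hcfin.mem_toFinset.mp (hγ j), rfl⟩

variable (hC : 1 ≤ C) (ht : 0 < t) (ht1 : t < 1)
  (hdec : ∀ (n : ℕ) (x : Fin s → ℝ), ‖((rmat M)⁻¹ ^ n).mulVec x‖ ≤ C * t ^ n * ‖x‖)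
  (hdet : IsUnit (rmat M).det)

include hdet in
lemma refine_identity {c : (Fin s → ℤ) → ℝ} (hcfin : (Function.support c).Finite)
    {φ : (Fin s → ℝ) → ℝ}
    (hφeq : ∀ x, φ x = ∑ᶠ k : Fin s → ℤ,
      c k * φ ((M.map (Int.cast : ℤ → ℝ)).mulVec x - icast k))
    (a d : Fin s → ℤ) (x : Fin s → ℝ) :
    φ ((rmat M)⁻¹.mulVec (x + icast d) + icast a)
    = ∑ b ∈ hcfin.toFinset.image (fun k => M.mulVec a + d - k),
        c (M.mulVec a - b + d) * φ (x + icast b) := by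
  classical
  have hz := hφeq ((rmat M)⁻¹.mulVec (x + icast d) + icast a)
  have hMz : (M.map (Int.cast : ℤ → ℝ)).mulVec ((rmat M)⁻¹.mulVec (x + icast d) + icast a)
      = x + icast (d + M.mulVec a) := by
    rw [show (M.map (Int.cast : ℤ → ℝ)) = rmat M from rfl, Matrix.mulVec_add,
      rmat_mulVec_inv_mulVec (M := M) hdet, ← icast_mulVec, icast_add]
    abel
  rw [hMz] at hz
  have hsupp : Function.support (fun k => c k * φ (x + icast (d + M.mulVec a) - icast k))
      ⊆ ↑hcfin.toFinset := by
    intro k hk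
    simp only [Function.mem_support] at hk
    have hck : c k ≠ 0 := fun h => hk (by rw [h, zero_mul])
    simpa [hcfin.mem_toFinset] using hck
  rw [finsum_eq_sum_of_support_subset _ hsupp] at hz
  have hinj : ∀ u ∈ hcfin.toFinset, ∀ v ∈ hcfin.toFinset,
      M.mulVec a + d - u = M.mulVec a + d - v → u = v := by
    intro u _ v _ h
    exact sub_right_injective h
  rw [Finset.sum_image hinj, hz]
  refine Finset.sum_congr rfl ?_
  intro k hk
  have e1 : M.mulVec a - (M.mulVec a + d - k) + d = k := by abel
  have e2 : x + icast (d + M.mulVec a) - icast k = x + icast (M.mulVec a + d - k) := by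
    simp only [icast_add, icast_sub]
    abel
  rw [e1, e2]

include hC ht ht1 hdec hdet in
lemma transition_relation
    {D : Finset (Fin s → ℤ)} (hD0 : (0 : Fin s → ℤ) ∈ D)
    (hDrep : ∀ x : Fin s → ℤ, ∃! d, d ∈ D ∧ ∃ y : Fin s → ℤ, x = d + M.mulVec y)
    (hTile : volume (Gset s M D) = 1)
    {c : (Fin s → ℤ) → ℝ} (hcfin : (Function.support c).Finite)
    {φ : (Fin s → ℝ) → ℝ} (hφc : HasCompactSupport φ)
    (hφeq : ∀ x, φ x = ∑ᶠ k : Fin s → ℤ,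
      c k * φ ((M.map (Int.cast : ℤ → ℝ)).mulVec x - icast k))
    (hcont : Continuous φ)
    {Ω : Finset (Fin s → ℤ)}
    (hΩcover : Kset s M c ⊆ ⋃ k ∈ Ω, (fun g => icast k + g) '' Gset s M D)
    {d : Fin s → ℤ} (hd : d ∈ D) {a : Fin s → ℤ} (ha : a ∈ Ω) :
    ∀ x ∈ Gset s M D,
      φ ((rmat M)⁻¹.mulVec (x + icast d) + icast a)
        = ∑ b ∈ Ω, c (M.mulVec a - b + d) * φ (x + icast b) := by
  classical
  have hcov := fun y => attr_cover hC ht ht1 hdec hdet hD0 hDrep y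
  have hTile' : volume (attr M D) = 1 := hTile
  set g₁ : (Fin s → ℝ) → ℝ := fun x => φ ((rmat M)⁻¹.mulVec (x + icast d) + icast a)
    with hg₁def
  set g₂ : (Fin s → ℝ) → ℝ := fun x => ∑ b ∈ Ω, c (M.mulVec a - b + d) * φ (x + icast b)
    with hg₂def
  have hcont₁ : Continuous g₁ := by
    apply hcont.comp
    have hmv : Continuous fun v : Fin s → ℝ => (rmat M)⁻¹.mulVec v := by
      have := (LinearMap.toContinuousLinearMap ((rmat M)⁻¹.mulVecLin)).continuous
      exact this
    exact ((hmv.comp (continuous_id.add continuous_const)).add continuous_const)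
  have hcont₂ : Continuous g₂ := by
    apply continuous_finset_sum
    intro b _
    exact continuous_const.mul (hcont.comp (continuous_id.add continuous_const))
  set SGood : Set (Fin s → ℝ) := (interior (attr M D)) \ (⋃ m : {m : Fin s → ℤ // m ≠ 0}, {x : Fin s → ℝ | x - icast m.1 ∈ attr M D}) with hSGood
  have heqon : Set.EqOn g₁ g₂ SGood := by
    intro x hx
    have hgood : ∀ b : Fin s → ℤ, b ∉ Ω → φ (x + icast b) = 0 := by
      intro b hb
      by_contra hφb
      have hxK : x + icast b ∈ Kset s M c := by
        rw [Kset_eq_attr hcfin]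
        exact support_subset_attr hC ht ht1 hdec hdet hcfin hφc hφeq hφb
      have hmem := hΩcover hxK
      rw [Set.mem_iUnion₂] at hmem
      obtain ⟨k, hkΩ, g, hg, heq⟩ := hmem
      have hkb : k - b ≠ 0 := by
        intro h0
        apply hb
        have : k = b := by
          funext j
          have := congrFun h0 j
          simp only [Pi.sub_apply, Pi.zero_apply] at this
          omega
        rwa [← this]
      have hxBad : x ∈ ⋃ m : {m : Fin s → ℤ // m ≠ 0},
          {x : Fin s → ℝ | x - icast m.1 ∈ attr M D} := by
        refine Set.mem_iUnion.mpr ⟨⟨k - b, hkb⟩, ?_⟩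
        show x - icast (k - b) ∈ attr M D
        rw [icast_sub, show x - (icast k - icast b) = x + icast b - icast k by abel, ← heq]
        have hg' : g ∈ attr M D := hg
        simpa using hg'
      exact hx.2 hxBad
    have hid := refine_identity (M := M) hdet hcfin hφeq a d x
    set Bf := hcfin.toFinset.image (fun k => M.mulVec a + d - k) with hBf
    have h1 : ∑ b ∈ Bf, c (M.mulVec a - b + d) * φ (x + icast b)
        = ∑ b ∈ Bf ∪ Ω, c (M.mulVec a - b + d) * φ (x + icast b) := by
      apply Finset.sum_subset Finset.subset_union_left
      intro b hbu hbn
      have hc0 : c (M.mulVec a - b + d) = 0 := by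
        by_contra hcne
        apply hbn
        rw [hBf, Finset.mem_image]
        refine ⟨M.mulVec a - b + d, hcfin.mem_toFinset.mpr hcne, ?_⟩
        abel
      rw [hc0, zero_mul]
    have h2 : ∑ b ∈ Ω, c (M.mulVec a - b + d) * φ (x + icast b)
        = ∑ b ∈ Bf ∪ Ω, c (M.mulVec a - b + d) * φ (x + icast b) := by
      apply Finset.sum_subset Finset.subset_union_right
      intro b hbu hbn
      rw [hgood b hbn, mul_zero]
    show g₁ x = g₂ x
    rw [hg₁def, hg₂def]
    simp only []
    rw [hid, h1, ← h2]
  have hdense := dense_good_points hC ht ht1 hdec hdet hTile' hcov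
  intro x hx
  have hx' : x ∈ closure SGood := hdense x hx
  exact (heqon.closure hcont₁ hcont₂) hx'

include hdet in
lemma inv_preserves_J {J : Submodule ℝ (Fin s → ℝ)}
    (hJinv : ∀ x ∈ J, (M.map (Int.cast : ℤ → ℝ)).mulVecLin x ∈ J) :
    ∀ x ∈ J, (rmat M)⁻¹.mulVec x ∈ J := by
  have h1 : ((rmat M)⁻¹.mulVecLin) ∘ₗ ((rmat M).mulVecLin) = LinearMap.id := by
    apply LinearMap.ext
    intro v
    simp only [LinearMap.comp_apply, Matrix.mulVecLin_apply, LinearMap.id_apply]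
    exact inv_mulVec_rmat_mulVec (M := M) hdet v
  have h2 : ((rmat M).mulVecLin) ∘ₗ ((rmat M)⁻¹.mulVecLin) = LinearMap.id := by
    apply LinearMap.ext
    intro v
    simp only [LinearMap.comp_apply, Matrix.mulVecLin_apply, LinearMap.id_apply]
    exact rmat_mulVec_inv_mulVec (M := M) hdet v
  set e : (Fin s → ℝ) ≃ₗ[ℝ] (Fin s → ℝ) :=
    LinearEquiv.ofLinear ((rmat M).mulVecLin) ((rmat M)⁻¹.mulVecLin) h2 h1 with he
  have hle : Submodule.map (e : (Fin s → ℝ) →ₗ[ℝ] (Fin s → ℝ)) J ≤ J := by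
    rintro y ⟨x, hx, rfl⟩
    exact hJinv x hx
  have heq : Submodule.map (e : (Fin s → ℝ) →ₗ[ℝ] (Fin s → ℝ)) J = J := by
    apply Submodule.eq_of_le_of_finrank_le hle
    rw [LinearEquiv.finrank_map_eq]
  intro x hx
  rw [← heq] at hx
  obtain ⟨j, hj, hej⟩ := hx
  have hxj : (rmat M)⁻¹.mulVec x = j := by
    rw [← hej]
    exact inv_mulVec_rmat_mulVec (M := M) hdet j
  rw [hxj]
  exact hj

end Part6

end Aux


theorem statement7
    {s : ℕ} (hs : 1 ≤ s)
    (M : Matrix (Fin s) (Fin s) ℤ)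
    (hMexp : ∀ μ ∈ spectrum ℂ (M.map (fun a => (a : ℂ))), 1 < ‖μ‖)
    (D : Finset (Fin s → ℤ)) (hD0 : (0 : Fin s → ℤ) ∈ D)
    (hDrep : ∀ x : Fin s → ℤ, ∃! d, d ∈ D ∧ ∃ y : Fin s → ℤ, x = d + M.mulVec y)
    (hTile : volume (Gset s M D) = 1)
    (c : (Fin s → ℤ) → ℝ) (hcfin : (Function.support c).Finite)
    (hsumrules : ∀ d ∈ D, ∑ᶠ k : Fin s → ℤ, c (M.mulVec k - d) = 1)
    (φ : (Fin s → ℝ) → ℝ) (hφc : HasCompactSupport φ)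
    (hφeq : ∀ x, φ x = ∑ᶠ k : Fin s → ℤ,
      c k * φ ((M.map (Int.cast : ℤ → ℝ)).mulVec x - icast k))
    (hφint : ∫ x, φ x = 1)
    (Ω : Finset (Fin s → ℤ))
    (hΩcover : Kset s M c ⊆ ⋃ k ∈ Ω, (fun g => icast k + g) '' Gset s M D)
    (hΩmin : ∀ Ω' : Finset (Fin s → ℤ),
      Kset s M c ⊆ (⋃ k ∈ Ω', (fun g => icast k + g) '' Gset s M D) → Ω.card ≤ Ω'.card)
    (hcont : Continuous φ)
    (J : Submodule ℝ (Fin s → ℝ))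
    (hJinv : ∀ x ∈ J, (M.map (Int.cast : ℤ → ℝ)).mulVecLin x ∈ J) :
    ∀ d ∈ D, ∀ u ∈ Udiff s M D Ω φ J, (Tmat s M c Ω d).mulVecLin u ∈ Udiff s M D Ω φ J := by
  classical
  have hdet : IsUnit (Aux.rmat M).det := Aux.isUnit_det_rmat hs M hMexp
  obtain ⟨C, t, hC, ht, ht1, hdec⟩ := Aux.decay M hs hMexp
  intro d hd u hu
  have key : ∀ w ∈ Gset s M D,
      (Tmat s M c Ω d).mulVecLin (vvec s Ω φ w)
        = vvec s Ω φ ((Aux.rmat M)⁻¹.mulVec (w + icast d)) := by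
    intro w hw
    funext a
    have hrel := Aux.transition_relation hC ht ht1 hdec hdet hD0 hDrep hTile hcfin hφc
      hφeq hcont hΩcover hd a.2 w hw
    have hlhs : ((Tmat s M c Ω d).mulVecLin (vvec s Ω φ w)) a
        = ∑ b : {k // k ∈ Ω}, c (M.mulVec a.1 - b.1 + d) * φ (w + icast b.1) := rfl
    have hsum : ∑ b : {k // k ∈ Ω}, c (M.mulVec a.1 - b.1 + d) * φ (w + icast b.1)
        = ∑ b ∈ Ω, c (M.mulVec a.1 - b + d) * φ (w + icast b) :=
      Finset.sum_coe_sort Ω (fun b => c (M.mulVec a.1 - b + d) * φ (w + icast b))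
    rw [hlhs, hsum, ← hrel]
    rfl
  refine Submodule.span_induction ?_ ?_ ?_ ?_ hu
  · rintro v ⟨x, hx, y, hy, hJxy, rfl⟩
    rw [map_sub, key y hy, key x hx]
    refine Submodule.subset_span ?_
    refine ⟨(Aux.rmat M)⁻¹.mulVec (x + icast d), ?_, (Aux.rmat M)⁻¹.mulVec (y + icast d),
      ?_, ?_, rfl⟩
    · exact Aux.attr_shift hC ht ht1 hdec hd hx
    · exact Aux.attr_shift hC ht ht1 hdec hd hy
    · have heq : (Aux.rmat M)⁻¹.mulVec (y + icast d) - (Aux.rmat M)⁻¹.mulVec (x + icast d)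
          = (Aux.rmat M)⁻¹.mulVec (y - x) := by
        rw [← Matrix.mulVec_sub]
        congr 1
        abel
      rw [heq]
      exact Aux.inv_preserves_J hdet hJinv _ hJxy
  · rw [map_zero]
    exact Submodule.zero_mem _
  · intro v w _ _ hv hw
    rw [map_add]
    exact Submodule.add_mem _ hv hw
  · intro r v _ hv
    rw [_root_.map_smul]
    exact Submodule.smul_mem _ _ hv


end
end

section
/- Assume that the segment [0,1] ⊂ ℝ is covered by ℓ distinct closed sets F_1, …, F_ℓ. Then there exist ℓ+1 points 0 = a_0 ≤ a_1 ≤ ⋯ ≤ a_ℓ = 1 such that for each i = 0, …, ℓ−1 the two points a_i and a_{i+1} belong to one and the same set F_j. -/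
open Filter MeasureTheory Matrix Set

noncomputable section

inductive MyReach (ℓ : ℕ) (F : Fin ℓ → Set ℝ) : Finset (Fin ℓ) → ℝ → Prop
  | zero (S : Finset (Fin ℓ)) : MyReach ℓ F S 0
  | step (S : Finset (Fin ℓ)) (k : Fin ℓ) (t' t : ℝ) (hk : k ∈ S)
      (h : MyReach ℓ F (S.erase k) t') (hle : t' ≤ t) (h1 : t' ∈ F k) (h2 : t ∈ F k) :
      MyReach ℓ F S t

lemma myReach_mono {ℓ : ℕ} {F : Fin ℓ → Set ℝ} {S S' : Finset (Fin ℓ)} {t : ℝ}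
    (h : MyReach ℓ F S t) (hss : S ⊆ S') : MyReach ℓ F S' t := by
  induction h generalizing S' with
  | zero => exact .zero _
  | step S k t' t hk h hle h1 h2 ih =>
    exact .step S' k t' t (hss hk) (ih (Finset.erase_subset_erase k hss)) hle h1 h2

lemma myReach_splice {ℓ : ℕ} {F : Fin ℓ → Set ℝ} {S : Finset (Fin ℓ)} {t : ℝ}
    (h : MyReach ℓ F S t) (k : Fin ℓ) :
    MyReach ℓ F (S.erase k) t ∨ ∃ u, u ≤ t ∧ u ∈ F k ∧ MyReach ℓ F (S.erase k) u := by
  induction h with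
  | zero => exact .inl (.zero _)
  | step S k' t' t hk' h hle h1 h2 ih =>
    by_cases hkk : k' = k
    · subst hkk; exact .inr ⟨t', hle, h1, h⟩
    · rcases ih with h' | ⟨u, hu1, hu2, hu3⟩
      · refine .inl (.step _ k' t' t (Finset.mem_erase.2 ⟨hkk, hk'⟩) ?_ hle h1 h2)
        rwa [Finset.erase_right_comm] at h'
      · exact .inr ⟨u, hu1.trans hle, hu2,
          myReach_mono hu3 (by rw [Finset.erase_right_comm]; exact Finset.erase_subset _ _)⟩

lemma myReach_extend {ℓ : ℕ} {F : Fin ℓ → Set ℝ} {S : Finset (Fin ℓ)} {t t' : ℝ} {k : Fin ℓ}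
    (h : MyReach ℓ F S t) (hk : k ∈ S)
    (h1 : t ∈ F k) (hle : t ≤ t') (h2 : t' ∈ F k) : MyReach ℓ F S t' := by
  rcases myReach_splice h k with h' | ⟨u, hu1, hu2, hu3⟩
  · exact .step S k t t' hk h' hle h1 h2
  · exact .step S k u t' hk hu3 (hu1.trans hle) hu2 h2

lemma myReach_chain {ℓ : ℕ} {F : Fin ℓ → Set ℝ} {S : Finset (Fin ℓ)} {t : ℝ}
    (h : MyReach ℓ F S t) :
    ∃ m, m ≤ S.card ∧ ∃ x : ℕ → ℝ, x 0 = 0 ∧ (∀ i, m ≤ i → x i = t) ∧ Monotone x ∧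
      ∀ i, i < m → ∃ j, x i ∈ F j ∧ x (i + 1) ∈ F j := by
  induction h with
  | zero S =>
    exact ⟨0, Nat.zero_le _, fun _ => 0, rfl, fun _ _ => rfl, monotone_const,
      fun i hi => absurd hi (Nat.not_lt_zero i)⟩
  | step S k t' t hk h hle h1 h2 ih =>
    obtain ⟨m, hm, x, hx0, hxm, hmono, hstep⟩ := ih
    have hcard : (S.erase k).card + 1 = S.card := Finset.card_erase_add_one hk
    refine ⟨m + 1, by omega, fun i => if i ≤ m then x i else t, by simp [hx0], ?_, ?_, ?_⟩
    · intro i hi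
      simp [Nat.not_le.2 (by omega : m < i)]
    · apply monotone_nat_of_le_succ
      intro i
      by_cases hi : i + 1 ≤ m
      · simp only [if_pos (by omega : i ≤ m), if_pos hi]
        exact hmono (Nat.le_succ i)
      · by_cases hi' : i ≤ m
        · have : i = m := by omega
          subst this
          simp only [if_pos le_rfl, if_neg hi]
          exact (hxm i le_rfl).le.trans hle
        · simp [hi, hi']
    · intro i hi
      by_cases hi' : i + 1 ≤ m
      · obtain ⟨j, hj1, hj2⟩ := hstep i (by omega)
        exact ⟨j, by simpa [if_pos (by omega : i ≤ m)] using hj1,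
          by simpa [if_pos hi', (by omega : i < m)] using hj2⟩
      · have : i = m := by omega
        subst this
        refine ⟨k, ?_, ?_⟩
        · simpa [hxm i le_rfl] using h1
        · simpa [if_neg hi'] using h2

theorem statement10
    (ℓ : ℕ) (F : Fin ℓ → Set ℝ) (hclosed : ∀ i, IsClosed (F i))
    (hdist : Function.Injective F)
    (hcover : Set.Icc (0 : ℝ) 1 ⊆ ⋃ i, F i) :
    ∃ a : Fin (ℓ + 1) → ℝ, a 0 = 0 ∧ a (Fin.last ℓ) = 1 ∧ Monotone a ∧
      ∀ i : Fin ℓ, ∃ j, a i.castSucc ∈ F j ∧ a i.succ ∈ F j := by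
  classical
  set R : Set ℝ := {t | t ∈ Set.Icc (0:ℝ) 1 ∧ MyReach ℓ F Finset.univ t} with hR
  have h0R : (0:ℝ) ∈ R := ⟨⟨le_refl 0, zero_le_one⟩, .zero _⟩
  have hne : R.Nonempty := ⟨0, h0R⟩
  have hbdd : BddAbove R := ⟨1, fun t ht => ht.1.2⟩
  set c := sSup R with hc
  have hlub : IsLUB R c := isLUB_csSup hne hbdd
  have hc0 : 0 ≤ c := hlub.1 h0R
  have hc1 : c ≤ 1 := hlub.2 fun t ht => ht.1.2
  have key : ∀ A : Set ℝ, A ⊆ Set.Icc 0 1 → c ∈ closure A →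
      ∃ k, c ∈ F k ∧ (F k ∩ A).Nonempty := by
    intro A hA hcA
    have hsub : A ⊆ ⋃ k, (F k ∩ A) := by
      intro t ht
      obtain ⟨_, ⟨k, rfl⟩, hk⟩ := hcover (hA ht)
      exact Set.mem_iUnion.2 ⟨k, hk, ht⟩
    have hclosed' : IsClosed (⋃ k, closure (F k ∩ A)) :=
      isClosed_iUnion_of_finite fun k => isClosed_closure
    have hmem : c ∈ ⋃ k, closure (F k ∩ A) :=
      closure_minimal (hsub.trans (Set.iUnion_mono fun k => subset_closure)) hclosed' hcA
    obtain ⟨_, ⟨k, rfl⟩, hk⟩ := hmem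
    refine ⟨k, closure_minimal Set.inter_subset_left (hclosed k) hk, ?_⟩
    by_contra h
    rw [Set.not_nonempty_iff_eq_empty] at h
    simp only [h, closure_empty] at hk
    exact hk
  have hcR : c ∈ R := by
    obtain ⟨k, hck, t, htk, htR⟩ := key R (fun t ht => ht.1) (hlub.mem_closure hne)
    exact ⟨⟨hc0, hc1⟩, myReach_extend htR.2 (Finset.mem_univ k) htk (hlub.1 htR) hck⟩
  have hc1' : c = 1 := by
    by_contra h
    have hlt : c < 1 := lt_of_le_of_ne hc1 h
    have hcl : c ∈ closure (Set.Ioc c 1) := by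
      rw [closure_Ioc hlt.ne]
      exact ⟨le_refl c, hc1⟩
    obtain ⟨k, hck, u, huk, huI⟩ :=
      key (Set.Ioc c 1) (fun t ht => ⟨hc0.trans ht.1.le, ht.2⟩) hcl
    have huR : u ∈ R := ⟨⟨hc0.trans huI.1.le, huI.2⟩,
      myReach_extend hcR.2 (Finset.mem_univ k) hck huI.1.le huk⟩
    exact absurd (hlub.1 huR) (not_le.2 huI.1)
  have h1reach : MyReach ℓ F Finset.univ 1 := hc1' ▸ hcR.2
  obtain ⟨m, hm, x, hx0, hxm, hmono, hstep⟩ := myReach_chain h1reach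
  rw [Finset.card_univ, Fintype.card_fin] at hm
  refine ⟨fun i => x i, by simp [hx0], by simp [hxm ℓ hm], ?_, ?_⟩
  · intro i j hij
    exact hmono hij
  · intro i
    by_cases hi : (i : ℕ) < m
    · obtain ⟨j, hj1, hj2⟩ := hstep i hi
      exact ⟨j, hj1, hj2⟩
    · have h1 : x (i : ℕ) = 1 := hxm _ (by omega)
      have h2 : x ((i : ℕ) + 1) = 1 := hxm _ (by omega)
      obtain ⟨_, ⟨j, rfl⟩, hj⟩ := hcover (⟨zero_le_one, le_refl 1⟩ : (1:ℝ) ∈ Set.Icc (0:ℝ) 1)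
      refine ⟨j, ?_, ?_⟩
      · show x ((i.castSucc : Fin (ℓ+1)) : ℕ) ∈ F j
        simpa [h1] using hj
      · show x ((i.succ : Fin (ℓ+1)) : ℕ) ∈ F j
        simpa [Fin.val_succ, h2] using hj

end
end
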